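/- In an infinite-horizon γ-discounted zero-sum polymatrix Markov game (zero-sum NMG), if π is an ε-approximate Markov (perfect) stationary CCE, then the product π̂ of the per-state marginals of π is an (n+1)ε/(1−γ)-approximate Markov (perfect) stationary Nash equilibrium; i.e., max_s max_i max_{μ_i ∈ Δ(A_i)^{|S|}} (V_i^{μ_i, π̂_{-i}}(s) − V_i^{π̂}(s)) ≤ (n+1)ε/(1−γ). -/

import Mathlib

set_option linter.unusedSectionVars false
set_option linter.unusedVariables false
set_option maxHeartbeats 1000000

section nmgAux
variable {N : Type*} [Fintype N] [DecidableEq N]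
variable {A : N → Type*} [∀ i, Fintype (A i)] [∀ i, DecidableEq (A i)]

/-- marginal of a joint distribution -/
def nmgMarg (ρ : (∀ k, A k) → ℝ) (j : N) (c : A j) : ℝ :=
  ∑ b : ∀ k, A k, if b j = c then ρ b else 0

lemma nmgMarg_sum (ρ : (∀ k, A k) → ℝ) (j : N) (t : A j → ℝ) :
    ∑ c, nmgMarg ρ j c * t c = ∑ a, ρ a * t (a j) := by
  unfold nmgMarg
  simp only [Finset.sum_mul, ite_mul, zero_mul]
  rw [Finset.sum_comm]
  simp [Finset.sum_ite_eq]

lemma nmgMarg_nonneg (ρ : (∀ k, A k) → ℝ) (hρ : ∀ a, 0 ≤ ρ a) (j : N) (c : A j) :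
    0 ≤ nmgMarg ρ j c := by
  apply Finset.sum_nonneg
  intro b _
  split <;> simp [hρ]

lemma nmgMarg_sum_one (ρ : (∀ k, A k) → ℝ) (hρ : ∑ a, ρ a = 1) (j : N) :
    ∑ c, nmgMarg ρ j c = 1 := by
  have := nmgMarg_sum ρ j (fun _ => 1)
  simpa [hρ] using this

def nmgSwap (i : N) : ((∀ k, A k) × A i) ≃ ((∀ k, A k) × A i) where
  toFun p := (Function.update p.1 i p.2, p.1 i)
  invFun p := (Function.update p.1 i p.2, p.1 i)
  left_inv p := by
    ext <;> simp [Function.update_idem, Function.update_self]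
  right_inv p := by
    ext <;> simp [Function.update_idem, Function.update_self]

lemma nmg_dev_eq (ρ : (∀ k, A k) → ℝ) (i : N) (μ : A i → ℝ)
    (g : A i → (∀ k, A k) → ℝ)
    (hg : ∀ c a b, g c (Function.update a i b) = g c a) :
    ∑ a : ∀ k, A k, (μ (a i) * ∑ b, ρ (Function.update a i b)) * g (a i) a
      = ∑ c, μ c * ∑ a, ρ a * g c a := by
  have h1 : ∑ a : ∀ k, A k, (μ (a i) * ∑ b, ρ (Function.update a i b)) * g (a i) a
      = ∑ p : (∀ k, A k) × A i, μ (p.1 i) * ρ (Function.update p.1 i p.2) * g (p.1 i) p.1 := by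
    rw [Fintype.sum_prod_type]
    apply Finset.sum_congr rfl
    intro a _
    rw [Finset.mul_sum, Finset.sum_mul]
  have h2 : ∑ c, μ c * ∑ a, ρ a * g c a
      = ∑ p : (∀ k, A k) × A i, μ p.2 * ρ p.1 * g p.2 p.1 := by
    rw [Fintype.sum_prod_type]
    rw [Finset.sum_comm]
    apply Finset.sum_congr rfl
    intro c _
    rw [Finset.mul_sum]
    apply Finset.sum_congr rfl
    intro a _
    ring
  rw [h1, h2]
  rw [← Equiv.sum_comp (nmgSwap i) (fun p => μ p.2 * ρ p.1 * g p.2 p.1)]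
  apply Finset.sum_congr rfl
  rintro ⟨a, b⟩ _
  simp only [nmgSwap, Equiv.coe_fn_mk]
  simp [Function.update_idem, hg]

/-- P3: sum of a product distribution -/
lemma nmg_sum_prod (f : ∀ k, A k → ℝ) :
    ∑ a : ∀ k, A k, ∏ j, f j (a j) = ∏ j, ∑ c, f j c := by
  rw [Finset.prod_univ_sum]
  rw [← Fintype.piFinset_univ]

/-- P1 -/
lemma nmg_sum_update_prod (f : ∀ k, A k → ℝ) (i : N) (hfi : ∑ c, f i c = 1)
    (a : ∀ k, A k) :
    ∑ b, ∏ j, f j (Function.update a i b j) = ∏ j ∈ Finset.univ.erase i, f j (a j) := by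
  have h : ∀ b : A i, ∏ j, f j (Function.update a i b j)
      = f i b * ∏ j ∈ Finset.univ.erase i, f j (a j) := by
    intro b
    rw [← Finset.mul_prod_erase Finset.univ _ (Finset.mem_univ i)]
    congr 1
    · rw [Function.update_self]
    · apply Finset.prod_congr rfl
      intro j hj
      rw [Function.update_of_ne (Finset.ne_of_mem_erase hj)]
  simp only [h, ← Finset.sum_mul, hfi, one_mul]

/-- P2: marginal of a product distribution -/
lemma nmg_marg_prod (f : ∀ k, A k → ℝ) (hf : ∀ k, ∑ c, f k c = 1) (j : N) (c : A j) :
    nmgMarg (fun a => ∏ k, f k (a k)) j c = f j c := by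
  unfold nmgMarg
  have h : ∀ a : ∀ k, A k, (if a j = c then ∏ k, f k (a k) else 0)
      = ∏ k, Function.update f j (fun d => if d = c then f j d else 0) k (a k) := by
    intro a
    by_cases h : a j = c
    · simp only [h, if_pos rfl]
      apply Finset.prod_congr rfl
      intro k _
      by_cases hk : k = j
      · subst hk; rw [Function.update_self]; simp [h]
      · rw [Function.update_of_ne hk]
    · rw [if_neg h]
      symm
      apply Finset.prod_eq_zero (Finset.mem_univ j)
      rw [Function.update_self, if_neg h]
  simp only [h]
  rw [nmg_sum_prod]
  rw [← Finset.mul_prod_erase Finset.univ _ (Finset.mem_univ j)]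
  have h1 : ∑ d, Function.update f j (fun d => if d = c then f j d else 0) j d = f j c := by
    rw [Function.update_self]
    simp [Finset.sum_ite_eq']
  have h2 : ∀ k ∈ Finset.univ.erase j,
      ∑ d, Function.update f j (fun d => if d = c then f j d else 0) k d = 1 := by
    intro k hk
    rw [Function.update_of_ne (Finset.ne_of_mem_erase hk)]
    exact hf k
  rw [h1, Finset.prod_congr rfl h2]
  simp

lemma nmg_exp_marg {ρ₁ ρ₂ : (∀ k, A k) → ℝ}
    (hm : ∀ j c, nmgMarg ρ₁ j c = nmgMarg ρ₂ j c) (k : N) (t : A k → ℝ) :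
    ∑ a, ρ₁ a * t (a k) = ∑ a, ρ₂ a * t (a k) := by
  rw [← nmgMarg_sum, ← nmgMarg_sum]
  simp [hm]

/-- the key invariance: the conditional expected payoff of player `i` playing `c`,
under opponents drawn from `ρ`, only depends on the single-coordinate marginals of `ρ`. -/
lemma nmg_exp_invariant {S : Type*} [Fintype S]
    (E : N → N → Prop) [DecidableRel E]
    (rp : ∀ i j, S → A i → A j → ℝ) (γ : ℝ)
    (P : S → (∀ i, A i) → S → ℝ)
    (hPdec : (∃ (C : Finset N) (F : ∀ i, S → A i → S → ℝ),
                ∀ s (a : ∀ i, A i) s', P s a s' = ∑ i ∈ C, F i s (a i) s') ∨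
             (∃ Fo : S → S → ℝ, ∀ s (a : ∀ i, A i) s', P s a s' = Fo s s'))
    {ρ₁ ρ₂ : (∀ k, A k) → ℝ} (h1 : ∑ a, ρ₁ a = 1) (h2 : ∑ a, ρ₂ a = 1)
    (hm : ∀ j c, nmgMarg ρ₁ j c = nmgMarg ρ₂ j c)
    (s : S) (U : S → ℝ) (i : N) (c : A i) :
    ∑ a, ρ₁ a * ((∑ j ∈ Finset.univ.filter (fun j => E i j), rp i j s c (a j)) +
        γ * ∑ s', P s (Function.update a i c) s' * U s')
    = ∑ a, ρ₂ a * ((∑ j ∈ Finset.univ.filter (fun j => E i j), rp i j s c (a j)) +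
        γ * ∑ s', P s (Function.update a i c) s' * U s') := by
  have split : ∀ ρ : (∀ k, A k) → ℝ,
      ∑ a, ρ a * ((∑ j ∈ Finset.univ.filter (fun j => E i j), rp i j s c (a j)) +
        γ * ∑ s', P s (Function.update a i c) s' * U s')
      = (∑ j ∈ Finset.univ.filter (fun j => E i j), ∑ a, ρ a * rp i j s c (a j)) +
        γ * ∑ a, ρ a * ∑ s', P s (Function.update a i c) s' * U s' := by
    intro ρ
    simp only [mul_add, Finset.sum_add_distrib, Finset.mul_sum]
    congr 1
    · rw [Finset.sum_comm]
    · apply Finset.sum_congr rfl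
      intro a _
      apply Finset.sum_congr rfl
      intro s' _
      ring
  rw [split, split]
  congr 1
  · apply Finset.sum_congr rfl
    intro j hj
    exact nmg_exp_marg hm j (fun d => rp i j s c d)
  · congr 1
    rcases hPdec with ⟨C, F, hF⟩ | ⟨Fo, hFo⟩
    · have hP : ∀ (ρ : (∀ k, A k) → ℝ),
          ∑ a, ρ a * ∑ s', P s (Function.update a i c) s' * U s'
          = ∑ k ∈ C, ∑ a, ρ a * ∑ s', F k s (Function.update a i c k) s' * U s' := by
        intro ρ
        rw [Finset.sum_comm]
        apply Finset.sum_congr rfl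
        intro a _
        rw [← Finset.mul_sum]
        congr 1
        rw [Finset.sum_comm]
        apply Finset.sum_congr rfl
        intro s' _
        rw [hF, Finset.sum_mul]
      rw [hP, hP]
      apply Finset.sum_congr rfl
      intro k _
      by_cases hk : k = i
      · subst hk
        simp only [Function.update_self, ← Finset.sum_mul, h1, h2]
      · have hup : ∀ a : ∀ k', A k', Function.update a i c k = a k :=
          fun a => Function.update_of_ne hk c a
        simp only [hup]
        exact nmg_exp_marg hm k (fun d => ∑ s', F k s d s' * U s')
    · simp only [hFo, ← Finset.sum_mul, h1, h2]

end nmgAux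

section bellman
variable {S : Type*} [Fintype S] [Nonempty S] {α : Type*} [Fintype α]

/-- uniqueness of bounded solutions to a discounted linear fixed-point equation -/
lemma nmg_contraction_zero (γ : ℝ) (hγ0 : 0 ≤ γ) (hγ1 : γ < 1)
    (ρ : S → α → ℝ) (hρnn : ∀ s a, 0 ≤ ρ s a) (hρsum : ∀ s, ∑ a, ρ s a = 1)
    (P : S → α → S → ℝ) (hPnn : ∀ s a s', 0 ≤ P s a s') (hPsum : ∀ s a, ∑ s', P s a s' = 1)
    (D : S → ℝ) (hD : ∀ s, D s = γ * ∑ a, ρ s a * ∑ s', P s a s' * D s') :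
    ∀ s, D s = 0 := by
  obtain ⟨s₀, -, hs₀⟩ := Finset.exists_max_image Finset.univ (fun s => |D s|)
    ⟨Classical.arbitrary S, Finset.mem_univ _⟩
  set M := |D s₀| with hM
  have hMn : 0 ≤ M := abs_nonneg _
  have key : ∀ s, |D s| ≤ γ * M := by
    intro s
    rw [hD s, abs_mul, abs_of_nonneg hγ0]
    apply mul_le_mul_of_nonneg_left _ hγ0
    calc |∑ a, ρ s a * ∑ s', P s a s' * D s'|
        ≤ ∑ a, |ρ s a * ∑ s', P s a s' * D s'| := Finset.abs_sum_le_sum_abs _ _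
      _ ≤ ∑ a, ρ s a * M := by
          apply Finset.sum_le_sum
          intro a _
          rw [abs_mul, abs_of_nonneg (hρnn s a)]
          apply mul_le_mul_of_nonneg_left _ (hρnn s a)
          calc |∑ s', P s a s' * D s'| ≤ ∑ s', |P s a s' * D s'| :=
                Finset.abs_sum_le_sum_abs _ _
            _ ≤ ∑ s', P s a s' * M := by
                apply Finset.sum_le_sum
                intro s' _
                rw [abs_mul, abs_of_nonneg (hPnn s a s')]
                exact mul_le_mul_of_nonneg_left (hs₀ s' (Finset.mem_univ s')) (hPnn s a s')
            _ = M := by rw [← Finset.sum_mul, hPsum, one_mul]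
      _ = M := by rw [← Finset.sum_mul, hρsum, one_mul]
  have hM0 : M ≤ γ * M := key s₀
  have hMz : M = 0 := by nlinarith
  intro s
  have h2 := key s
  rw [hMz, mul_zero] at h2
  exact abs_eq_zero.mp (le_antisymm h2 (abs_nonneg _))

/-- existence of the value function: fixed point of the Bellman operator -/
lemma nmg_bellman_exists (γ : ℝ) (hγ0 : 0 ≤ γ) (hγ1 : γ < 1)
    (ρ : S → α → ℝ) (hρnn : ∀ s a, 0 ≤ ρ s a) (hρsum : ∀ s, ∑ a, ρ s a = 1)
    (P : S → α → S → ℝ) (hPnn : ∀ s a s', 0 ≤ P s a s') (hPsum : ∀ s a, ∑ s', P s a s' = 1)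
    (R : S → α → ℝ) :
    ∃ Z : S → ℝ, ∀ s, Z s = ∑ a, ρ s a * (R s a + γ * ∑ s', P s a s' * Z s') := by
  set T : (S → ℝ) → (S → ℝ) :=
    fun U s => ∑ a, ρ s a * (R s a + γ * ∑ s', P s a s' * U s') with hT
  have hLip : LipschitzWith ⟨γ, hγ0⟩ T := by
    apply LipschitzWith.of_dist_le_mul
    intro U U'
    show dist (T U) (T U') ≤ γ * dist U U'
    have hd : (0:ℝ) ≤ γ * dist U U' := mul_nonneg hγ0 dist_nonneg
    rw [dist_pi_le_iff hd]
    intro s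
    rw [Real.dist_eq]
    have hTd : T U s - T U' s
        = γ * ∑ a, ρ s a * ∑ s', P s a s' * (U s' - U' s') := by
      simp only [hT]
      rw [← Finset.sum_sub_distrib, Finset.mul_sum]
      apply Finset.sum_congr rfl
      intro a _
      have hps : ∑ s', P s a s' * (U s' - U' s')
          = (∑ s', P s a s' * U s') - ∑ s', P s a s' * U' s' := by
        rw [← Finset.sum_sub_distrib]
        exact Finset.sum_congr rfl fun s' _ => mul_sub _ _ _
      rw [hps]
      ring
    rw [hTd, abs_mul, abs_of_nonneg hγ0]
    apply mul_le_mul_of_nonneg_left _ hγ0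
    calc |∑ a, ρ s a * ∑ s', P s a s' * (U s' - U' s')|
        ≤ ∑ a, |ρ s a * ∑ s', P s a s' * (U s' - U' s')| := Finset.abs_sum_le_sum_abs _ _
      _ ≤ ∑ a, ρ s a * dist U U' := by
          apply Finset.sum_le_sum
          intro a _
          rw [abs_mul, abs_of_nonneg (hρnn s a)]
          apply mul_le_mul_of_nonneg_left _ (hρnn s a)
          calc |∑ s', P s a s' * (U s' - U' s')| ≤ ∑ s', |P s a s' * (U s' - U' s')| :=
                Finset.abs_sum_le_sum_abs _ _
            _ ≤ ∑ s', P s a s' * dist U U' := by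
                apply Finset.sum_le_sum
                intro s' _
                rw [abs_mul, abs_of_nonneg (hPnn s a s')]
                apply mul_le_mul_of_nonneg_left _ (hPnn s a s')
                rw [← Real.dist_eq]
                exact dist_le_pi_dist U U' s'
            _ = dist U U' := by rw [← Finset.sum_mul, hPsum, one_mul]
      _ = dist U U' := by rw [← Finset.sum_mul, hρsum, one_mul]
  have hC : ContractingWith ⟨γ, hγ0⟩ T := ⟨by exact_mod_cast hγ1, hLip⟩
  refine ⟨hC.fixedPoint T, ?_⟩
  intro s
  conv_lhs => rw [← hC.fixedPoint_isFixedPt]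

end bellman
theorem zeroSum_NMG_CCE_to_NE {S N : Type*} [Fintype S] [Nonempty S]
    [Fintype N] [DecidableEq N]
    (A : N → Type*) [∀ i, Fintype (A i)] [∀ i, Nonempty (A i)] [∀ i, DecidableEq (A i)]
    (E : N → N → Prop) [DecidableRel E] (hirr : ∀ i, ¬ E i i)
    (rp : ∀ i j, S → A i → A j → ℝ)    -- pairwise rewards r_{i,j}(s, a_i, a_j)
    (γ ε : ℝ) (hγ0 : 0 < γ) (hγ1 : γ < 1) (hε : 0 ≤ ε)
    -- the rewards are zero-sum at every state and joint action
    (hzs : ∀ (s : S) (a : ∀ i, A i),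
      ∑ i, ∑ j ∈ Finset.univ.filter (fun j => E i j), rp i j s (a i) (a j) = 0)
    (P : S → (∀ i, A i) → S → ℝ)
    (hPnn : ∀ s a s', 0 ≤ P s a s') (hPsum : ∀ s a, ∑ s', P s a s' = 1)
    -- networked transition structure: an ensemble of single-controller kernels, or constant
    (hPdec : (∃ (C : Finset N) (F : ∀ i, S → A i → S → ℝ),
                ∀ s (a : ∀ i, A i) s', P s a s' = ∑ i ∈ C, F i s (a i) s') ∨
             (∃ Fo : S → S → ℝ, ∀ s (a : ∀ i, A i) s', P s a s' = Fo s s'))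
    -- π : a stationary joint (possibly correlated) Markov policy
    (π : S → (∀ i, A i) → ℝ)
    (hπnn : ∀ s a, 0 ≤ π s a) (hπsum : ∀ s, ∑ a, π s a = 1)
    -- V i = the value function of player i under π
    (V : N → S → ℝ) (hVbdd : ∃ M, ∀ i s, |V i s| ≤ M)
    (hV : ∀ i s, V i s = ∑ a : ∀ j, A j, π s a *
      ((∑ j ∈ Finset.univ.filter (fun j => E i j), rp i j s (a i) (a j)) +
        γ * ∑ s', P s a s' * V i s'))
    -- π is an ε-approximate Markov perfect stationary CCE
    (hCCE : ∀ (i : N) (μ : S → A i → ℝ), (∀ s b, 0 ≤ μ s b) → (∀ s, ∑ b, μ s b = 1) →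
      ∀ W : S → ℝ, (∃ M, ∀ s, |W s| ≤ M) →
        (∀ s, W s = ∑ a : ∀ j, A j,
          (μ s (a i) * ∑ b : A i, π s (Function.update a i b)) *
          ((∑ j ∈ Finset.univ.filter (fun j => E i j), rp i j s (a i) (a j)) +
            γ * ∑ s', P s a s' * W s')) →
        ∀ s, W s - V i s ≤ ε) :
    -- conclusion: the product π̂ of the per-state marginals of π is an
    -- (n+1)ε/(1−γ)-approximate Markov perfect stationary NE
    ∀ (i : N) (μ : S → A i → ℝ), (∀ s b, 0 ≤ μ s b) → (∀ s, ∑ b, μ s b = 1) →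
      ∀ Vhat W : S → ℝ, (∃ M, ∀ s, |Vhat s| ≤ M) → (∃ M, ∀ s, |W s| ≤ M) →
        -- Vhat : player i's value under π̂
        (∀ s, Vhat s = ∑ a : ∀ j, A j,
          (∏ j, (∑ b : ∀ k, A k, if b j = a j then π s b else 0)) *
          ((∑ j ∈ Finset.univ.filter (fun j => E i j), rp i j s (a i) (a j)) +
            γ * ∑ s', P s a s' * Vhat s')) →
        -- W : player i's value when deviating to μ against π̂_{-i}
        (∀ s, W s = ∑ a : ∀ j, A j,
          (μ s (a i) * ∏ j ∈ Finset.univ.erase i,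
            (∑ b : ∀ k, A k, if b j = a j then π s b else 0)) *
          ((∑ j ∈ Finset.univ.filter (fun j => E i j), rp i j s (a i) (a j)) +
            γ * ∑ s', P s a s' * W s')) →
        ∀ s, W s - Vhat s ≤ ((Fintype.card N : ℝ) + 1) * ε / (1 - γ) := by
  intro i μ hμnn hμsum Vhat W hVhatb hWb hVhat hW s
  -- the product-of-marginals policy
  set π' : S → (∀ k, A k) → ℝ := fun s a => ∏ j, nmgMarg (π s) j (a j) with hπ'
  have hmarg1 : ∀ s j, ∑ c, nmgMarg (π s) j c = 1 :=
    fun s j => nmgMarg_sum_one (π s) (hπsum s) j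
  have hπ'nn : ∀ s a, 0 ≤ π' s a := by
    intro s a
    simp only [hπ']
    exact Finset.prod_nonneg fun j _ => nmgMarg_nonneg (π s) (hπnn s) j (a j)
  have hπ'sum : ∀ s, ∑ a, π' s a = 1 := by
    intro s
    simp only [hπ']
    rw [nmg_sum_prod]
    exact Finset.prod_eq_one fun j _ => hmarg1 s j
  have hmm : ∀ s j c, nmgMarg (π' s) j c = nmgMarg (π s) j c := by
    intro s j c
    simp only [hπ']
    exact nmg_marg_prod (fun j => nmgMarg (π s) j) (hmarg1 s) j c
  -- conversion of deviation values between the correlated policy and the product policy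
  have devconv : ∀ (k : N) (μk : A k → ℝ) (U : S → ℝ) (s : S),
      ∑ a : ∀ k', A k', (μk (a k) * ∑ b, π' s (Function.update a k b)) *
        ((∑ j ∈ Finset.univ.filter (fun j => E k j), rp k j s (a k) (a j)) +
          γ * ∑ s', P s a s' * U s')
      = ∑ a : ∀ k', A k', (μk (a k) * ∑ b, π s (Function.update a k b)) *
        ((∑ j ∈ Finset.univ.filter (fun j => E k j), rp k j s (a k) (a j)) +
          γ * ∑ s', P s a s' * U s') := by
    intro k μk U s
    set g : A k → (∀ k', A k') → ℝ := fun c a =>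
      (∑ j ∈ Finset.univ.filter (fun j => E k j), rp k j s c (a j)) +
        γ * ∑ s', P s (Function.update a k c) s' * U s' with hgdef
    have hg : ∀ c a b, g c (Function.update a k b) = g c a := by
      intro c a b
      simp only [hgdef]
      congr 1
      · apply Finset.sum_congr rfl
        intro j hj
        have hjk : j ≠ k := by
          intro h
          subst h
          exact hirr j (by simpa using (Finset.mem_filter.mp hj).2)
        rw [Function.update_of_ne hjk]
      · rw [Function.update_idem]
    have hsummand : ∀ (ρ : (∀ k', A k') → ℝ) (a : ∀ k', A k'),
        (μk (a k) * ∑ b, ρ (Function.update a k b)) *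
          ((∑ j ∈ Finset.univ.filter (fun j => E k j), rp k j s (a k) (a j)) +
            γ * ∑ s', P s a s' * U s')
        = (μk (a k) * ∑ b, ρ (Function.update a k b)) * g (a k) a := by
      intro ρ a
      simp only [hgdef, Function.update_eq_self]
    calc ∑ a : ∀ k', A k', (μk (a k) * ∑ b, π' s (Function.update a k b)) *
          ((∑ j ∈ Finset.univ.filter (fun j => E k j), rp k j s (a k) (a j)) +
            γ * ∑ s', P s a s' * U s')
        = ∑ a : ∀ k', A k', (μk (a k) * ∑ b, π' s (Function.update a k b)) * g (a k) a :=
          Finset.sum_congr rfl fun a _ => hsummand (π' s) a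
      _ = ∑ c, μk c * ∑ a, π' s a * g c a := nmg_dev_eq (π' s) k μk g hg
      _ = ∑ c, μk c * ∑ a, π s a * g c a := by
          apply Finset.sum_congr rfl
          intro c _
          congr 1
          simp only [hgdef]
          exact nmg_exp_invariant E rp γ P hPdec (hπ'sum s) (hπsum s)
            (fun j c' => hmm s j c') s U k c
      _ = ∑ a : ∀ k', A k', (μk (a k) * ∑ b, π s (Function.update a k b)) * g (a k) a :=
          (nmg_dev_eq (π s) k μk g hg).symm
      _ = _ := Finset.sum_congr rfl fun a _ => (hsummand (π s) a).symm
  -- every function on the finite state space is bounded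
  have hbdd : ∀ f : S → ℝ, ∃ M, ∀ s, |f s| ≤ M := by
    intro f
    obtain ⟨s₀, -, h⟩ := Finset.exists_max_image Finset.univ (fun s => |f s|)
      ⟨Classical.arbitrary S, Finset.mem_univ _⟩
    exact ⟨|f s₀|, fun s => h s (Finset.mem_univ s)⟩
  -- Step 1 : W is also the deviation value against the *correlated* marginal, hence W ≤ V i + ε
  have hWeq : ∀ s, W s = ∑ a : ∀ j, A j,
      (μ s (a i) * ∑ b : A i, π s (Function.update a i b)) *
      ((∑ j ∈ Finset.univ.filter (fun j => E i j), rp i j s (a i) (a j)) +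
        γ * ∑ s', P s a s' * W s') := by
    intro s
    rw [← devconv i (μ s) W s]
    have h1 : ∀ a : ∀ k, A k, (∑ b, π' s (Function.update a i b))
        = ∏ j ∈ Finset.univ.erase i, nmgMarg (π s) j (a j) := by
      intro a
      simp only [hπ']
      exact nmg_sum_update_prod (fun j => nmgMarg (π s) j) i (hmarg1 s i) a
    simp only [h1]
    exact hW s
  have hWle : ∀ s, W s - V i s ≤ ε := hCCE i μ hμnn hμsum W hWb hWeq
  -- Step 2 : construct the value functions Z k of all the players under the product policy
  have hZex : ∀ k : N, ∃ Zk : S → ℝ, ∀ s, Zk s = ∑ a : ∀ j, A j, π' s a *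
      ((∑ j ∈ Finset.univ.filter (fun j => E k j), rp k j s (a k) (a j)) +
        γ * ∑ s', P s a s' * Zk s') := by
    intro k
    exact nmg_bellman_exists γ hγ0.le hγ1 π' hπ'nn hπ'sum P hPnn hPsum
      (fun s a => ∑ j ∈ Finset.univ.filter (fun j => E k j), rp k j s (a k) (a j))
  choose Z hZ using hZex
  -- difference algebra
  have hsub : ∀ (ρa : (∀ k, A k) → ℝ) (Ra : (∀ k, A k) → ℝ) (s : S) (U₁ U₂ : S → ℝ),
      (∑ a, ρa a * (Ra a + γ * ∑ s', P s a s' * U₁ s'))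
        - ∑ a, ρa a * (Ra a + γ * ∑ s', P s a s' * U₂ s')
      = γ * ∑ a, ρa a * ∑ s', P s a s' * (U₁ s' - U₂ s') := by
    intro ρa Ra s U₁ U₂
    rw [← Finset.sum_sub_distrib, Finset.mul_sum]
    apply Finset.sum_congr rfl
    intro a _
    have hps : ∑ s', P s a s' * (U₁ s' - U₂ s')
        = (∑ s', P s a s' * U₁ s') - ∑ s', P s a s' * U₂ s' := by
      rw [← Finset.sum_sub_distrib]
      exact Finset.sum_congr rfl fun s' _ => mul_sub _ _ _
    rw [hps]
    ring
  -- Vhat = Z i by uniqueness of bounded fixed points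
  have hVZ : ∀ s, Vhat s - Z i s = 0 := by
    apply nmg_contraction_zero γ hγ0.le hγ1 π' hπ'nn hπ'sum P hPnn hPsum
    intro s
    have h1 : Vhat s = ∑ a : ∀ j, A j, π' s a *
        ((∑ j ∈ Finset.univ.filter (fun j => E i j), rp i j s (a i) (a j)) +
          γ * ∑ s', P s a s' * Vhat s') := hVhat s
    rw [h1, hZ i s]
    exact hsub (π' s)
      (fun a => ∑ j ∈ Finset.univ.filter (fun j => E i j), rp i j s (a i) (a j)) s Vhat (Z i)
  -- Step 3 : each Z k is a deviation value (deviating to one's own marginal), so Z k ≤ V k + ε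
  have hZle : ∀ k s, Z k s - V k s ≤ ε := by
    intro k
    apply hCCE k (fun s c => nmgMarg (π s) k c)
      (fun s c => nmgMarg_nonneg (π s) (hπnn s) k c) (fun s => hmarg1 s k) (Z k) (hbdd (Z k))
    intro s
    rw [← devconv k (fun c => nmgMarg (π s) k c) (Z k) s]
    rw [hZ k s]
    apply Finset.sum_congr rfl
    intro a _
    congr 1
    have h1 : (∑ b, π' s (Function.update a k b))
        = ∏ j ∈ Finset.univ.erase k, nmgMarg (π s) j (a j) := by
      simp only [hπ']
      exact nmg_sum_update_prod (fun j => nmgMarg (π s) j) k (hmarg1 s k) a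
    rw [h1]
    simp only [hπ']
    exact (Finset.mul_prod_erase Finset.univ (fun j => nmgMarg (π s) j (a j))
      (Finset.mem_univ k)).symm
  -- Step 4 : zero-sum property of the values
  have hzero : ∀ (ρa : S → (∀ k, A k) → ℝ), (∀ s a, 0 ≤ ρa s a) → (∀ s, ∑ a, ρa s a = 1) →
      ∀ (Y : N → S → ℝ),
      (∀ k s, Y k s = ∑ a : ∀ j, A j, ρa s a *
        ((∑ j ∈ Finset.univ.filter (fun j => E k j), rp k j s (a k) (a j)) +
          γ * ∑ s', P s a s' * Y k s')) →
      ∀ s, ∑ k, Y k s = 0 := by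
    intro ρa hnn hsum Y hY
    apply nmg_contraction_zero γ hγ0.le hγ1 ρa hnn hsum P hPnn hPsum
    intro s
    calc ∑ k, Y k s
        = ∑ k, ∑ a : ∀ j, A j, ρa s a *
            ((∑ j ∈ Finset.univ.filter (fun j => E k j), rp k j s (a k) (a j)) +
              γ * ∑ s', P s a s' * Y k s') := Finset.sum_congr rfl fun k _ => hY k s
      _ = ∑ a : ∀ j, A j, ∑ k, ρa s a *
            ((∑ j ∈ Finset.univ.filter (fun j => E k j), rp k j s (a k) (a j)) +
              γ * ∑ s', P s a s' * Y k s') := Finset.sum_comm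
      _ = ∑ a : ∀ j, A j, ρa s a * (γ * ∑ s', P s a s' * ∑ k, Y k s') := by
          apply Finset.sum_congr rfl
          intro a _
          rw [← Finset.mul_sum]
          congr 1
          rw [Finset.sum_add_distrib, hzs s a, zero_add]
          rw [← Finset.mul_sum]
          congr 1
          rw [Finset.sum_comm]
          apply Finset.sum_congr rfl
          intro s' _
          rw [← Finset.mul_sum]
      _ = γ * ∑ a : ∀ j, A j, ρa s a * ∑ s', P s a s' * ∑ k, Y k s' := by
          rw [Finset.mul_sum]
          apply Finset.sum_congr rfl
          intro a _
          ring
  have hsumV : ∀ s, ∑ k, V k s = 0 := hzero π hπnn hπsum V hV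
  have hsumZ : ∀ s, ∑ k, Z k s = 0 := hzero π' hπ'nn hπ'sum Z hZ
  -- Step 5 : conclusion
  have e1 : Z i s + ∑ k ∈ Finset.univ.erase i, Z k s = 0 := by
    rw [Finset.add_sum_erase Finset.univ (fun k => Z k s) (Finset.mem_univ i)]
    exact hsumZ s
  have e2 : V i s + ∑ k ∈ Finset.univ.erase i, V k s = 0 := by
    rw [Finset.add_sum_erase Finset.univ (fun k => V k s) (Finset.mem_univ i)]
    exact hsumV s
  have b1 : ∑ k ∈ Finset.univ.erase i, Z k s ≤ ∑ k ∈ Finset.univ.erase i, (V k s + ε) :=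
    Finset.sum_le_sum fun k _ => by have := hZle k s; linarith
  have b2 : ∑ k ∈ Finset.univ.erase i, (V k s + ε)
      = (∑ k ∈ Finset.univ.erase i, V k s) + ((Fintype.card N : ℝ) - 1) * ε := by
    rw [Finset.sum_add_distrib, Finset.sum_const]
    congr 1
    rw [Finset.card_erase_of_mem (Finset.mem_univ i), Finset.card_univ]
    have hc : 1 ≤ Fintype.card N := @Fintype.card_pos N _ ⟨i⟩
    rw [nsmul_eq_mul, Nat.cast_sub hc, Nat.cast_one]
  have hWV := hWle s
  have hVZs := hVZ s
  have hn : (0:ℝ) ≤ (Fintype.card N : ℝ) := Nat.cast_nonneg _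
  have h1γ : (0:ℝ) < 1 - γ := by linarith
  have hbound : W s - Vhat s ≤ (Fintype.card N : ℝ) * ε := by linarith
  rw [le_div_iff₀ h1γ]
  nlinarith [mul_nonneg (mul_nonneg hn hε) hγ0.le, mul_le_mul_of_nonneg_right hbound h1γ.le]
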